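/- Let μ be a probability distribution over {−1,+1}^n with generating function g_μ(z₁,…,z_n) = ∑_σ μ(σ)·∏_{i: σ_i = +1} z_i, and let α ∈ (0,1). Define F(z) = g_μ(z₁^α,…,z_n^α)^{1/α} / ∏_i (μ_i(+1)z_i + μ_i(−1)). Suppose μ is ζ-marginally stable for some ζ > 1, meaning in particular μ_i^σ(+1)/μ_i^σ(−1) ≤ 2ζ·μ_i(+1) for every i and every feasible pinning σ of the other coordinates. Then for any x ∈ ℝ_{>0}^n and any coordinate i with x_i ≥ (2ζ)^{1/(1−α)}, the partial derivative ∂F/∂z_i evaluated at x is ≤ 0. -/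

import Mathlib

open Finset

/-- Marginal probability `μ_i(b)` (with `true` encoding spin `+1`). -/
noncomputable def margProb {n : ℕ} (μ : (Fin n → Bool) → ℝ) (i : Fin n) (b : Bool) : ℝ :=
  ∑ σ : Fin n → Bool, if σ i = b then μ σ else 0

/-- Generating function `g_μ(z) = ∑_σ μ(σ) ∏_{i : σ_i = +1} z_i`. -/
noncomputable def genFun {n : ℕ} (μ : (Fin n → Bool) → ℝ) (z : Fin n → ℝ) : ℝ :=
  ∑ σ : Fin n → Bool, μ σ * ∏ i : Fin n, if σ i then z i else 1

/-- `F(z) = g_μ(z₁^α,…,z_n^α)^{1/α} / ∏ᵢ (μ_i(+1) zᵢ + μ_i(−1))`. -/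
noncomputable def Ffun {n : ℕ} (μ : (Fin n → Bool) → ℝ) (α : ℝ) (z : Fin n → ℝ) : ℝ :=
  (genFun μ fun i => z i ^ α) ^ (1 / α) /
    ∏ i : Fin n, (margProb μ i true * z i + margProb μ i false)

set_option maxHeartbeats 1000000 in
theorem partial_deriv_nonpos_of_marginal_stability {n : ℕ} (α ζ : ℝ)
    (hα : α ∈ Set.Ioo (0 : ℝ) 1) (hζ : 1 < ζ)
    (μ : (Fin n → Bool) → ℝ) (hμ0 : ∀ σ, 0 ≤ μ σ)
    (hμ1 : ∑ σ : Fin n → Bool, μ σ = 1)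
    (hms : ∀ (i : Fin n) (τ : Fin n → Bool),
      0 < μ (Function.update τ i true) + μ (Function.update τ i false) →
      μ (Function.update τ i true)
        ≤ 2 * ζ * margProb μ i true * μ (Function.update τ i false)) :
    ∀ x : Fin n → ℝ, (∀ j, 0 < x j) → ∀ i : Fin n,
      (2 * ζ) ^ ((1 : ℝ) / (1 - α)) ≤ x i →
      deriv (fun t => Ffun μ α (Function.update x i t)) (x i) ≤ 0 := by
  obtain ⟨hα0, hα1⟩ := hα
  intro x hx i hxi
  have ht0 : 0 < x i := hx i
  -- abbreviations
  set p := margProb μ i true with hp_def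
  set q := margProb μ i false with hq_def
  set Pf : (Fin n → Bool) → ℝ :=
    fun σ => ∏ j ∈ Finset.univ.erase i, (if σ j then x j ^ α else 1) with hPf_def
  set A := ∑ σ : Fin n → Bool, if σ i = false then μ σ * Pf σ else 0 with hA_def
  set B := ∑ σ : Fin n → Bool, if σ i = true then μ σ * Pf σ else 0 with hB_def
  set C := ∏ j ∈ Finset.univ.erase i,
    (margProb μ j true * x j + margProb μ j false) with hC_def
  -- basic nonnegativity
  have hPf0 : ∀ σ, 0 ≤ Pf σ := fun σ =>
    Finset.prod_nonneg fun j _ => by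
      split
      · exact Real.rpow_nonneg (hx j).le _
      · exact zero_le_one
  have hmnn : ∀ (j : Fin n) (b : Bool), 0 ≤ margProb μ j b := fun j b =>
    Finset.sum_nonneg fun σ _ => by split <;> [exact hμ0 σ; exact le_refl 0]
  have hA0 : 0 ≤ A := Finset.sum_nonneg fun σ _ => by
    split
    · exact mul_nonneg (hμ0 σ) (hPf0 σ)
    · exact le_refl 0
  have hB0 : 0 ≤ B := Finset.sum_nonneg fun σ _ => by
    split
    · exact mul_nonneg (hμ0 σ) (hPf0 σ)
    · exact le_refl 0
  -- marginals at a coordinate sum to 1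
  have hpq : ∀ j, margProb μ j true + margProb μ j false = 1 := by
    intro j
    unfold margProb
    rw [← Finset.sum_add_distrib, ← hμ1]
    exact Finset.sum_congr rfl fun σ _ => by cases hsj : σ j <;> simp [hsj]
  have hp0 : 0 ≤ p := hmnn i true
  have hq0 : 0 ≤ q := hmnn i false
  have hpq1 : p + q = 1 := hpq i
  -- rewriting the generating function
  have hsplit : ∀ (t : ℝ) (σ : Fin n → Bool),
      (∏ j : Fin n, if σ j then Function.update x i t j ^ α else 1)
        = (if σ i then t ^ α else 1) * Pf σ := by
    intro t σ
    rw [← Finset.mul_prod_erase Finset.univ _ (Finset.mem_univ i)]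
    congr 1
    · rw [Function.update_self]
    · exact Finset.prod_congr rfl fun j hj => by
        rw [Function.update_of_ne (Finset.ne_of_mem_erase hj)]
  have hg : ∀ t : ℝ, genFun μ (fun j => Function.update x i t j ^ α) = A + B * t ^ α := by
    intro t
    unfold genFun
    simp only [hsplit t]
    rw [hA_def, hB_def, Finset.sum_mul, ← Finset.sum_add_distrib]
    refine Finset.sum_congr rfl fun σ _ => ?_
    cases hσ : σ i <;> simp [hσ] <;> ring
  -- rewriting the denominator
  have hd : ∀ t : ℝ,
      (∏ j : Fin n, (margProb μ j true * Function.update x i t j + margProb μ j false))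
        = (p * t + q) * C := by
    intro t
    rw [← Finset.mul_prod_erase Finset.univ _ (Finset.mem_univ i)]
    congr 1
    · rw [Function.update_self]
    · exact Finset.prod_congr rfl fun j hj => by
        rw [Function.update_of_ne (Finset.ne_of_mem_erase hj)]
  have hfun : (fun t => Ffun μ α (Function.update x i t))
      = fun t => (A + B * t ^ α) ^ (1 / α) / ((p * t + q) * C) := by
    funext t
    unfold Ffun
    rw [hg t, hd t]
  -- positivity facts
  have hfact : ∀ j, 0 < margProb μ j true * x j + margProb μ j false := by
    intro j
    rcases (hmnn j false).eq_or_lt with h | h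
    · have hpj : margProb μ j true = 1 := by linarith [hpq j]
      nlinarith [hx j]
    · nlinarith [mul_nonneg (hmnn j true) (hx j).le]
  have hC : 0 < C := Finset.prod_pos fun j _ => hfact j
  have hden : 0 < p * x i + q := by
    have := hfact i
    rwa [← hp_def, ← hq_def] at this
  have hu0 : 0 < A + B * x i ^ α := by
    have h1 := hg (x i)
    rw [Function.update_eq_self] at h1
    rw [← h1]
    unfold genFun
    obtain ⟨σ0, hσ0⟩ : ∃ σ, 0 < μ σ := by
      by_contra h
      push_neg at h
      have : ∑ σ : Fin n → Bool, μ σ = 0 :=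
        Finset.sum_eq_zero fun σ _ => le_antisymm (h σ) (hμ0 σ)
      rw [hμ1] at this; norm_num at this
    have hterm : 0 < μ σ0 * ∏ j : Fin n, (if σ0 j then x j ^ α else 1) :=
      mul_pos hσ0 (Finset.prod_pos fun j _ => by
        split
        · exact Real.rpow_pos_of_pos (hx j) _
        · exact one_pos)
    have hle : μ σ0 * ∏ j : Fin n, (if σ0 j = true then x j ^ α else 1)
        ≤ ∑ σ : Fin n → Bool, μ σ * ∏ j : Fin n, (if σ j = true then x j ^ α else 1) :=
      Finset.single_le_sum
        (f := fun σ : Fin n → Bool => μ σ * ∏ j : Fin n, (if σ j = true then x j ^ α else 1))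
        (fun σ _ => mul_nonneg (hμ0 σ) (Finset.prod_nonneg fun j _ => by
          split
          · exact Real.rpow_nonneg (hx j).le _
          · exact zero_le_one))
        (Finset.mem_univ σ0)
    show 0 < ∑ σ : Fin n → Bool, μ σ * ∏ j : Fin n, (if σ j = true then x j ^ α else 1)
    exact hterm.trans_le hle
  -- key inequality B ≤ 2ζ p A
  have hBA : B ≤ 2 * ζ * p * A := by
    have heinv : Function.Involutive (fun σ : Fin n → Bool => Function.update σ i (!(σ i))) := by
      intro σ
      funext j
      by_cases h : j = i
      · subst h; simp
      · simp [Function.update_of_ne h]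
    have hB2 : B = ∑ σ : Fin n → Bool,
        if σ i = false then μ (Function.update σ i true) * Pf σ else 0 := by
      rw [hB_def]
      rw [← Fintype.sum_bijective _ heinv.bijective
        (fun σ : Fin n → Bool =>
          if (Function.update σ i (!(σ i))) i = true
            then μ (Function.update σ i (!(σ i))) * Pf (Function.update σ i (!(σ i))) else 0)
        _ (fun σ => rfl)]
      refine Finset.sum_congr rfl fun σ _ => ?_
      cases hσ : σ i
      · simp only [hσ, Bool.not_false, Function.update_self, if_true]
        have hPfeq : Pf (Function.update σ i true) = Pf σ :=
          Finset.prod_congr rfl fun j hj => by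
            rw [Function.update_of_ne (Finset.ne_of_mem_erase hj)]
        rw [hPfeq]
      · simp [hσ]
    have hA2 : 2 * ζ * p * A = ∑ σ : Fin n → Bool,
        if σ i = false then 2 * ζ * p * (μ σ * Pf σ) else 0 := by
      rw [hA_def, Finset.mul_sum]
      exact Finset.sum_congr rfl fun σ _ => by split <;> simp
    rw [hB2, hA2]
    refine Finset.sum_le_sum fun σ _ => ?_
    by_cases hσ : σ i = false
    · simp only [hσ, if_true]
      have hσeq : Function.update σ i false = σ := by
        conv_lhs => rw [← hσ]
        exact Function.update_eq_self i σ
      by_cases hpos : 0 < μ (Function.update σ i true) + μ (Function.update σ i false)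
      · have hkey := hms i σ hpos
        rw [hσeq] at hkey
        calc μ (Function.update σ i true) * Pf σ
            ≤ (2 * ζ * p * μ σ) * Pf σ := mul_le_mul_of_nonneg_right hkey (hPf0 σ)
          _ = 2 * ζ * p * (μ σ * Pf σ) := by ring
      · push_neg at hpos
        have h1 : μ (Function.update σ i true) = 0 :=
          le_antisymm (by nlinarith [hμ0 (Function.update σ i false)]) (hμ0 _)
        rw [h1, zero_mul]
        have h2ζ' : (0:ℝ) ≤ 2 * ζ := by linarith
        calc (0:ℝ) ≤ 2 * ζ * (p * (μ σ * Pf σ)) :=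
              mul_nonneg h2ζ' (mul_nonneg hp0 (mul_nonneg (hμ0 σ) (hPf0 σ)))
          _ = 2 * ζ * p * (μ σ * Pf σ) := by ring
    · simp [hσ]
  -- bound 2ζ * (x i)^(α-1) ≤ 1
  have h2ζ : (0:ℝ) < 2 * ζ := by linarith
  have hM : 2 * ζ ≤ x i ^ (1 - α) := by
    have h := Real.rpow_le_rpow (Real.rpow_pos_of_pos h2ζ _).le hxi (by linarith : (0:ℝ) ≤ 1 - α)
    rwa [← Real.rpow_mul h2ζ.le, one_div, inv_mul_cancel₀ (by linarith : (1:ℝ) - α ≠ 0),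
      Real.rpow_one] at h
  have hts : 2 * ζ * x i ^ (α - 1) ≤ 1 := by
    have hMpos : 0 < x i ^ (1 - α) := Real.rpow_pos_of_pos ht0 _
    have hrw : x i ^ (α - 1) = (x i ^ (1 - α))⁻¹ := by
      rw [show (α - 1) = -(1 - α) by ring, Real.rpow_neg ht0.le]
    rw [hrw]
    calc 2 * ζ * (x i ^ (1 - α))⁻¹ ≤ x i ^ (1 - α) * (x i ^ (1 - α))⁻¹ :=
          mul_le_mul_of_nonneg_right hM (inv_nonneg.mpr hMpos.le)
      _ = 1 := mul_inv_cancel₀ hMpos.ne'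
  -- the central inequality
  have hkey : B * x i ^ (α - 1) * (p * x i + q) ≤ p * (A + B * x i ^ α) := by
    have h1 : x i ^ (α - 1) * x i = x i ^ α := by
      rw [← Real.rpow_add_one ht0.ne' (α - 1)]
      norm_num
    have hrp : 0 ≤ x i ^ (α - 1) := Real.rpow_nonneg ht0.le _
    have hq1 : q ≤ 1 := by linarith
    have h2 : q * (B * x i ^ (α - 1)) ≤ p * A := by
      have hb1 : B * x i ^ (α - 1) ≤ 2 * ζ * p * A * x i ^ (α - 1) :=
        mul_le_mul_of_nonneg_right hBA hrp
      have hpA : 0 ≤ p * A := mul_nonneg hp0 hA0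
      have hb2 : 2 * ζ * p * A * x i ^ (α - 1) ≤ p * A := by
        calc 2 * ζ * p * A * x i ^ (α - 1) = (p * A) * (2 * ζ * x i ^ (α - 1)) := by ring
          _ ≤ (p * A) * 1 := mul_le_mul_of_nonneg_left hts hpA
          _ = p * A := mul_one _
      have hBnn : 0 ≤ B * x i ^ (α - 1) := mul_nonneg hB0 hrp
      nlinarith
    have h3 : B * x i ^ (α - 1) * (p * x i) = p * (B * x i ^ α) := by
      rw [← h1]; ring
    nlinarith [h2, h3]
  -- derivative computation
  have hu : HasDerivAt (fun t : ℝ => A + B * t ^ α) (B * (α * x i ^ (α - 1))) (x i) :=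
    ((Real.hasDerivAt_rpow_const (Or.inl ht0.ne')).const_mul B).const_add A
  have hG : HasDerivAt (fun t : ℝ => (A + B * t ^ α) ^ (1 / α))
      (B * (α * x i ^ (α - 1)) * (1 / α) * (A + B * x i ^ α) ^ (1 / α - 1)) (x i) :=
    hu.rpow_const (Or.inl hu0.ne')
  have hD : HasDerivAt (fun t : ℝ => (p * t + q) * C) (p * 1 * C) (x i) :=
    (((hasDerivAt_id (x i)).const_mul p).add_const q).mul_const C
  have hden0 : (p * x i + q) * C ≠ 0 := (mul_pos hden hC).ne'
  have hF := hG.div hD hden0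
  rw [hfun]
  show deriv ((fun t : ℝ => (A + B * t ^ α) ^ (1 / α)) / fun t => (p * t + q) * C) (x i) ≤ 0
  rw [hF.deriv]
  -- show the derivative value is ≤ 0
  have hnum : B * (α * x i ^ (α - 1)) * (1 / α) * (A + B * x i ^ α) ^ (1 / α - 1)
        * ((p * x i + q) * C)
      - (A + B * x i ^ α) ^ (1 / α) * (p * 1 * C) ≤ 0 := by
    set s := (A + B * x i ^ α) ^ (1 / α - 1) with hs_def
    have hs0 : 0 ≤ s := Real.rpow_nonneg hu0.le _
    have hrw : (A + B * x i ^ α) ^ (1 / α) = s * (A + B * x i ^ α) := by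
      rw [hs_def, Real.rpow_sub_one hu0.ne']
      field_simp
    rw [hrw]
    have hsc : 0 ≤ s * C := mul_nonneg hs0 hC.le
    have hstep : (s * C) * (B * x i ^ (α - 1) * (p * x i + q))
        ≤ (s * C) * (p * (A + B * x i ^ α)) := mul_le_mul_of_nonneg_left hkey hsc
    have hαne : α ≠ 0 := hα0.ne'
    have heq : B * (α * x i ^ (α - 1)) * (1 / α) * s * ((p * x i + q) * C)
        = (s * C) * (B * x i ^ (α - 1) * (p * x i + q)) := by
      field_simp
    have hfinal : B * (α * x i ^ (α - 1)) * (1 / α) * s * ((p * x i + q) * C)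
        ≤ s * (A + B * x i ^ α) * (p * 1 * C) := by
      calc B * (α * x i ^ (α - 1)) * (1 / α) * s * ((p * x i + q) * C)
          = (s * C) * (B * x i ^ (α - 1) * (p * x i + q)) := heq
        _ ≤ (s * C) * (p * (A + B * x i ^ α)) := hstep
        _ = s * (A + B * x i ^ α) * (p * 1 * C) := by ring
    linarith [hfinal]
  have hd2 : (0:ℝ) ≤ ((p * x i + q) * C) ^ 2 := sq_nonneg _
  exact div_nonpos_of_nonpos_of_nonneg hnum hd2
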